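/- If f : ℝ^n → ℝ is a cubic polynomial that is concave on the nonnegative orthant ℝ₊ⁿ, then writing -∇²f(x) = A₀ + x₁A₁ + ⋯ + xₙAₙ for symmetric matrices A₀,…,Aₙ, every matrix Aᵢ (i = 0,…,n) is positive semidefinite. -/

import Mathlib

open MvPolynomial Matrix

/-- If `f` is a cubic polynomial concave on the nonnegative orthant, and its negated
Hessian is written as the pencil `A₀ + x₁ A₁ + ⋯ + xₙ Aₙ` with symmetric `Aᵢ`, then
every `Aᵢ` is positive semidefinite. -/
theorem cubic_concave_pencil_psd
    (n : ℕ) (f : MvPolynomial (Fin n) ℝ) (hdeg : f.totalDegree ≤ 3)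
    (A₀ : Matrix (Fin n) (Fin n) ℝ) (A : Fin n → Matrix (Fin n) (Fin n) ℝ)
    (hA₀ : A₀.IsSymm) (hA : ∀ i, (A i).IsSymm)
    (hpencil : ∀ (x : Fin n → ℝ) (i j : Fin n),
      -(eval x (pderiv i (pderiv j f))) = (A₀ + ∑ k : Fin n, x k • A k) i j)
    (hconc : ∀ x : Fin n → ℝ, (∀ i, 0 ≤ x i) →
      (Matrix.of fun i j => -(eval x (pderiv i (pderiv j f)))).PosSemidef) :
    A₀.PosSemidef ∧ ∀ i, (A i).PosSemidef := by
  have hM : ∀ x : Fin n → ℝ, (∀ i, 0 ≤ x i) →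
      (A₀ + ∑ k : Fin n, x k • A k).PosSemidef := by
    intro x hx
    have h := hconc x hx
    have he : (Matrix.of fun i j => -(eval x (pderiv i (pderiv j f))))
        = A₀ + ∑ k : Fin n, x k • A k := by
      ext i j
      exact hpencil x i j
    rwa [he] at h
  have h0 : A₀.PosSemidef := by
    have := hM 0 (fun i => le_refl 0)
    simpa using this
  refine ⟨h0, fun i => ?_⟩
  rw [Matrix.posSemidef_iff_dotProduct_mulVec]
  constructor
  · rw [Matrix.IsHermitian]
    ext a b
    have := (hA i).symm
    rw [Matrix.conjTranspose]
    simp [Matrix.transpose_apply]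
    nth_rewrite 1 [← hA i]
    simp [Matrix.transpose_apply]
  · intro v
    by_contra hneg
    push_neg at hneg
    set b : ℝ := star v ⬝ᵥ (A i *ᵥ v) with hb
    have hbneg : b < 0 := hneg
    have ha : 0 ≤ star v ⬝ᵥ (A₀ *ᵥ v) := h0.dotProduct_mulVec_nonneg v
    set a : ℝ := star v ⬝ᵥ (A₀ *ᵥ v) with hadef
    set t : ℝ := (a + 1) / (-b) with ht
    have htpos : 0 ≤ t := by
      apply div_nonneg <;> linarith
    -- choose x = t at coordinate i, 0 elsewhere
    have key := (hM (fun k => if k = i then t else 0)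
      (fun k => by split <;> simp [htpos])).dotProduct_mulVec_nonneg v
    have hsum : (∑ k : Fin n, (if k = i then t else 0) • A k) = t • A i := by
      rw [Finset.sum_eq_single i]
      · simp
      · intro k _ hk; simp [hk]
      · simp
    rw [hsum] at key
    have hexp : star v ⬝ᵥ ((A₀ + t • A i) *ᵥ v) = a + t * b := by
      rw [Matrix.add_mulVec, Matrix.smul_mulVec, dotProduct_add, dotProduct_smul]
      simp [hadef, hb, smul_eq_mul]
    rw [hexp] at key
    have hbne : b ≠ 0 := ne_of_lt hbneg
    have : t * b = -(a + 1) := by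
      rw [ht, div_neg, neg_mul, div_mul_cancel₀ _ hbne]
    linarith
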